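/- Let A ∈ ℝ^{m×n} be a matrix of rank one, let X₁, X₂ be independent standard Gaussian vectors in ℝⁿ, and let θ ≥ 1. Then P(T^cb(θ,X) ≥ ‖A‖) = 1, i.e., the Counterbalance estimator almost surely does not underestimate the spectral norm of a rank-one matrix. -/

import Mathlib

open MeasureTheory ProbabilityTheory Real Matrix

/-- Spectral norm (ℓ²→ℓ² operator norm) of a real matrix. -/
noncomputable def matSpectralNorm {m n : ℕ} (A : Matrix (Fin m) (Fin n) ℝ) : ℝ :=
  ‖LinearMap.toContinuousLinearMap (Matrix.toEuclideanLin A)‖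

/-- Frobenius norm of a real matrix. -/
noncomputable def frobeniusNorm {m n : ℕ} (A : Matrix (Fin m) (Fin n) ℝ) : ℝ :=
  Real.sqrt (∑ i, ∑ j, (A i j) ^ 2)

/-- Effective rank `ρ = ‖A‖_F² / ‖A‖²`. -/
noncomputable def effectiveRank {m n : ℕ} (A : Matrix (Fin m) (Fin n) ℝ) : ℝ :=
  frobeniusNorm A ^ 2 / matSpectralNorm A ^ 2

/-- The standard Gaussian measure on `EuclideanSpace ℝ (Fin n)`: the law of a random
vector with i.i.d. `N(0,1)` coordinates. -/
noncomputable def stdGaussian (n : ℕ) : Measure (EuclideanSpace ℝ (Fin n)) :=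
  (Measure.pi fun _ : Fin n => gaussianReal 0 1).map
    (MeasurableEquiv.toLp 2 (Fin n → ℝ))

/-- CDF of the chi-squared distribution with one degree of freedom:
`χ₁²(t) = P(ξ² ≤ t)` for `ξ ~ N(0,1)`. -/
noncomputable def chiSq1CDF (t : ℝ) : ℝ :=
  ((gaussianReal 0 1) {x : ℝ | x ^ 2 ≤ t}).toReal

/-- Density of the chi-squared distribution with one degree of freedom:
`p₁(u) = e^{-u/2} / √(2 π u)`. -/
noncomputable def chiSq1PDF (u : ℝ) : ℝ :=
  Real.exp (-u / 2) / Real.sqrt (2 * Real.pi * u)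

/-- Density `p_{(1,α)}` of `ξ² + α η²` for `ξ, η` i.i.d. `N(0,1)`:
`p_{(1,α)}(t) = ∫₀^t p₁(s) (1/α) p₁((t-s)/α) ds`. -/
noncomputable def weightedChiSqPDF (α : ℝ) (t : ℝ) : ℝ :=
  ∫ s in (0:ℝ)..t, chiSq1PDF s * ((1 / α) * chiSq1PDF ((t - s) / α))

/-- The Counterbalance estimator
`T^cb(θ, (x₁, x₂)) = θ √((‖AᵀAx₁‖/‖Ax₁‖)² + ‖Ax₂‖²)`. -/
noncomputable def counterbalance {m n : ℕ} (A : Matrix (Fin m) (Fin n) ℝ) (θ : ℝ)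
    (x₁ x₂ : EuclideanSpace ℝ (Fin n)) : ℝ :=
  θ * Real.sqrt ((‖Matrix.toEuclideanLin Aᵀ (Matrix.toEuclideanLin A x₁)‖ /
      ‖Matrix.toEuclideanLin A x₁‖) ^ 2 + ‖Matrix.toEuclideanLin A x₂‖ ^ 2)


/-- Auxiliary: the i.i.d. standard Gaussian product measure is absolutely continuous
with respect to Lebesgue measure on `Fin n → ℝ`. -/
lemma aux_pi_gauss_ac : ∀ n : ℕ, Measure.pi (fun _ : Fin n => gaussianReal 0 1)
    ≪ (volume : Measure (Fin n → ℝ))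
  | 0 => by
    intro s hs
    rcases Set.eq_empty_or_nonempty s with rfl | hne
    · simp
    · exfalso
      have hsu : s = Set.univ := hne.eq_univ
      rw [hsu] at hs
      have : (volume : Measure (Fin 0 → ℝ)) Set.univ = 1 := by
        simp [volume_pi, Measure.pi_univ]
      rw [hs] at this
      simp at this
  | (n+1) => by
    have h1 := MeasurePreserving.symm _
      (measurePreserving_piFinSuccAbove (fun _ : Fin (n+1) => gaussianReal 0 1) 0)
    have h2 := MeasurePreserving.symm _
      (volume_preserving_piFinSuccAbove (fun _ : Fin (n+1) => ℝ) 0)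
    rw [← h1.map_eq]
    have hac : (gaussianReal 0 1).prod (Measure.pi fun _ : Fin n => gaussianReal 0 1)
        ≪ (volume : Measure (ℝ × (Fin n → ℝ))) := by
      rw [Measure.volume_eq_prod]
      exact (gaussianReal_absolutelyContinuous 0 one_ne_zero).prod (aux_pi_gauss_ac n)
    calc Measure.map (MeasurableEquiv.piFinSuccAbove (fun _ : Fin (n+1) => ℝ) 0).symm
          ((gaussianReal 0 1).prod (Measure.pi fun _ : Fin n => gaussianReal 0 1))
        ≪ Measure.map (MeasurableEquiv.piFinSuccAbove (fun _ : Fin (n+1) => ℝ) 0).symm volume :=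
          hac.map (MeasurableEquiv.measurable _)
      _ = volume := h2.map_eq

lemma aux_stdGaussian_ac (n : ℕ) :
    stdGaussian n ≪ (volume : Measure (EuclideanSpace ℝ (Fin n))) := by
  unfold _root_.stdGaussian
  calc (Measure.pi fun _ : Fin n => gaussianReal 0 1).map
        (MeasurableEquiv.toLp 2 (Fin n → ℝ))
      ≪ (volume : Measure (Fin n → ℝ)).map (MeasurableEquiv.toLp 2 (Fin n → ℝ)) :=
        (aux_pi_gauss_ac n).map (MeasurableEquiv.measurable _)
    _ = volume :=
        (MeasurePreserving.symm _ (EuclideanSpace.volume_preserving_symm_measurableEquiv_toLp (Fin n))).map_eq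

/-- Auxiliary: for a rank-one matrix and `A x₁ ≠ 0`, the counterbalance ratio term is at
least the spectral norm. -/
lemma aux_key {m n : ℕ} (A : Matrix (Fin m) (Fin n) ℝ) (hrk : A.rank = 1)
    {x₁ : EuclideanSpace ℝ (Fin n)} (hx : Matrix.toEuclideanLin A x₁ ≠ 0) :
    matSpectralNorm A ≤ ‖Matrix.toEuclideanLin Aᵀ (Matrix.toEuclideanLin A x₁)‖ /
      ‖Matrix.toEuclideanLin A x₁‖ := by
  set T := Matrix.toEuclideanLin A with hT
  set T' := Matrix.toEuclideanLin Aᵀ with hT'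
  have hadj : ∀ (z : EuclideanSpace ℝ (Fin m)) (y : EuclideanSpace ℝ (Fin n)),
      (inner ℝ (T' z) y : ℝ) = inner ℝ z (T y) := by
    intro z y
    have h1 : Aᵀ = Aᴴ := by
      ext i j; simp [Matrix.conjTranspose_apply]
    rw [hT', h1, Matrix.toEuclideanLin_conjTranspose_eq_adjoint]
    exact LinearMap.adjoint_inner_left T y z
  have hr : Module.finrank ℝ (LinearMap.range T) = 1 := by
    rw [Matrix.rank_eq_finrank_range_toLin A (EuclideanSpace.basisFun (Fin m) ℝ).toBasis
      (EuclideanSpace.basisFun (Fin n) ℝ).toBasis,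
      ← Matrix.toEuclideanLin_eq_toLin_orthonormal] at hrk
    exact hrk
  obtain ⟨u, hu0, hu⟩ := finrank_eq_one_iff'.mp hr
  set u₀ : EuclideanSpace ℝ (Fin m) := (u : EuclideanSpace ℝ (Fin m)) with hu₀
  have hu₀0 : u₀ ≠ 0 := fun h => hu0 (Subtype.ext h)
  have hu₀pos : 0 < ‖u₀‖ := norm_pos_iff.mpr hu₀0
  have hTy : ∀ y : EuclideanSpace ℝ (Fin n), ∃ c : ℝ, T y = c • u₀ := by
    intro y
    obtain ⟨c, hc⟩ := hu ⟨T y, LinearMap.mem_range_self T y⟩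
    exact ⟨c, by simpa [hu₀] using congrArg (Subtype.val) hc.symm⟩
  have hbound : ∀ y : EuclideanSpace ℝ (Fin n), ‖T y‖ * ‖u₀‖ ≤ ‖T' u₀‖ * ‖y‖ := by
    intro y
    obtain ⟨c, hc⟩ := hTy y
    have h1 : |(inner ℝ (T' u₀) y : ℝ)| = ‖T y‖ * ‖u₀‖ := by
      rw [hadj u₀ y, hc, real_inner_smul_right, real_inner_self_eq_norm_mul_norm,
        norm_smul, Real.norm_eq_abs, abs_mul,
        abs_of_nonneg (mul_nonneg (norm_nonneg u₀) (norm_nonneg u₀))]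
      ring
    calc ‖T y‖ * ‖u₀‖ = |(inner ℝ (T' u₀) y : ℝ)| := h1.symm
      _ ≤ ‖T' u₀‖ * ‖y‖ := abs_real_inner_le_norm _ _
  have hop : matSpectralNorm A ≤ ‖T' u₀‖ / ‖u₀‖ := by
    apply ContinuousLinearMap.opNorm_le_bound _ (by positivity)
    intro y
    have h2 : ‖(LinearMap.toContinuousLinearMap T) y‖ = ‖T y‖ := rfl
    rw [h2, div_mul_eq_mul_div, le_div_iff₀ hu₀pos]
    linarith [hbound y]
  obtain ⟨c₁, hc₁⟩ := hTy x₁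
  have hc₁0 : c₁ ≠ 0 := by
    intro h; rw [h, zero_smul] at hc₁; exact hx hc₁
  have hnum : ‖T' (T x₁)‖ = |c₁| * ‖T' u₀‖ := by
    rw [hc₁, T'.map_smul, norm_smul, Real.norm_eq_abs]
  have hden : ‖T x₁‖ = |c₁| * ‖u₀‖ := by
    rw [hc₁, norm_smul, Real.norm_eq_abs]
  rw [hnum, hden, mul_div_mul_left _ _ (abs_ne_zero.mpr hc₁0)]
  exact hop

lemma aux_cb {m n : ℕ} (A : Matrix (Fin m) (Fin n) ℝ) (hrk : A.rank = 1)
    {x₁ : EuclideanSpace ℝ (Fin n)} (x₂ : EuclideanSpace ℝ (Fin n))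
    (hx : Matrix.toEuclideanLin A x₁ ≠ 0) {θ : ℝ} (hθ : 1 ≤ θ) :
    matSpectralNorm A ≤ counterbalance A θ x₁ x₂ := by
  set r := ‖Matrix.toEuclideanLin Aᵀ (Matrix.toEuclideanLin A x₁)‖ /
      ‖Matrix.toEuclideanLin A x₁‖ with hr
  have hr0 : 0 ≤ r := div_nonneg (norm_nonneg _) (norm_nonneg _)
  have h1 : matSpectralNorm A ≤ r := aux_key A hrk hx
  have h2 : r ≤ Real.sqrt (r ^ 2 + ‖Matrix.toEuclideanLin A x₂‖ ^ 2) := by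
    have := Real.sqrt_le_sqrt (le_add_of_nonneg_right (sq_nonneg ‖Matrix.toEuclideanLin A x₂‖)
      (a := r ^ 2))
    rwa [Real.sqrt_sq hr0] at this
  calc matSpectralNorm A ≤ r := h1
    _ ≤ Real.sqrt (r ^ 2 + ‖Matrix.toEuclideanLin A x₂‖ ^ 2) := h2
    _ = 1 * Real.sqrt (r ^ 2 + ‖Matrix.toEuclideanLin A x₂‖ ^ 2) := (one_mul _).symm
    _ ≤ θ * Real.sqrt (r ^ 2 + ‖Matrix.toEuclideanLin A x₂‖ ^ 2) :=
        mul_le_mul_of_nonneg_right hθ (Real.sqrt_nonneg _)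
    _ = counterbalance A θ x₁ x₂ := rfl

/-- for a rank-one matrix `A`, independent standard Gaussian `X₁, X₂`
and `θ ≥ 1`, the Counterbalance estimator a.s. does not underestimate:
`P(T^cb(θ,X) ≥ ‖A‖) = 1`. -/
theorem counterbalance_no_underestimation_of_rank_one
    {m n : ℕ} (A : Matrix (Fin m) (Fin n) ℝ) (hrk : A.rank = 1)
    {Ω : Type*} [MeasureSpace Ω] [IsProbabilityMeasure (ℙ : Measure Ω)]
    (X₁ X₂ : Ω → EuclideanSpace ℝ (Fin n))
    (hX₁ : Measure.map X₁ ℙ = stdGaussian n)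
    (hX₂ : Measure.map X₂ ℙ = stdGaussian n)
    (hindep : IndepFun X₁ X₂ ℙ)
    (θ : ℝ) (hθ : 1 ≤ θ) :
    ℙ {ω | matSpectralNorm A ≤ counterbalance A θ (X₁ ω) (X₂ ω)} = 1 := by
    classical
  set S : Set (EuclideanSpace ℝ (Fin n)) :=
    (LinearMap.ker (Matrix.toEuclideanLin A) : Set (EuclideanSpace ℝ (Fin n))) with hS
  have hA0 : Matrix.toEuclideanLin A ≠ 0 := by
    intro h
    have hA : A = 0 := by
      have := (Matrix.toEuclideanLin (𝕜 := ℝ) (m := Fin m) (n := Fin n)).injective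
      apply this
      simp [h]
    rw [hA] at hrk
    simp [Matrix.rank_zero] at hrk
  have hker : LinearMap.ker (Matrix.toEuclideanLin A) ≠ ⊤ := by
    intro h; exact hA0 (LinearMap.ker_eq_top.mp h)
  have hSnull : stdGaussian n S = 0 :=
    aux_stdGaussian_ac n (Measure.addHaar_submodule volume _ hker)
  have hprob : IsProbabilityMeasure (stdGaussian n) := by
    unfold _root_.stdGaussian
    exact Measure.isProbabilityMeasure_map (MeasurableEquiv.measurable _).aemeasurable
  have hX₁m : AEMeasurable X₁ ℙ := by
    apply aemeasurable_of_map_neZero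
    rw [hX₁]
    exact ⟨hprob.ne_zero _⟩
  have hSmeas : MeasurableSet S :=
    (Submodule.closed_of_finiteDimensional _).measurableSet
  have hpre : ℙ (X₁ ⁻¹' S) = 0 := by
    have := hSnull
    rw [← hX₁, Measure.map_apply_of_aemeasurable hX₁m hSmeas] at this
    exact this
  have hsub : (Set.univ : Set Ω) ⊆
      {ω | matSpectralNorm A ≤ counterbalance A θ (X₁ ω) (X₂ ω)} ∪ X₁ ⁻¹' S := by
    intro ω _
    by_cases h : Matrix.toEuclideanLin A (X₁ ω) = 0
    · right
      exact LinearMap.mem_ker.mpr h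
    · left
      exact aux_cb A hrk (X₂ ω) h hθ
  have h1 : (1 : ENNReal) ≤ ℙ {ω | matSpectralNorm A ≤ counterbalance A θ (X₁ ω) (X₂ ω)} := by
    calc (1 : ENNReal) = ℙ Set.univ := measure_univ.symm
      _ ≤ ℙ ({ω | matSpectralNorm A ≤ counterbalance A θ (X₁ ω) (X₂ ω)} ∪ X₁ ⁻¹' S) :=
          measure_mono hsub
      _ ≤ ℙ {ω | matSpectralNorm A ≤ counterbalance A θ (X₁ ω) (X₂ ω)} + ℙ (X₁ ⁻¹' S) :=
          measure_union_le _ _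
      _ = ℙ {ω | matSpectralNorm A ≤ counterbalance A θ (X₁ ω) (X₂ ω)} := by
          rw [hpre, add_zero]
  exact le_antisymm prob_le_one h1
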